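/- arXiv:1207.4937 — 3 statements merged into one kernel-verified Lean document; each statement's English description precedes it below -/
import Mathlib

section
/- For a continuous map f on a compact metric space, the weak polynomial entropy is at most the strong polynomial entropy: h_pol^*(f) ≤ h_pol(f). -/
open Set Filter Metric

/-- The dynamical metric `d_n^f(x,y) = max_{0 ≤ k ≤ n-1} d(f^k x, f^k y)`. -/
noncomputable def dynDist {X : Type*} [PseudoMetricSpace X] (f : X → X) (n : ℕ) (x y : X) : ℝ :=
  (((Finset.range n).sup fun k => nndist (f^[k] x) (f^[k] y)) : NNReal)

/-- `G_n^f(ε)`: the minimal number of `d_n^f`-balls of radius `ε` covering the space. -/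
noncomputable def coverNum {X : Type*} [PseudoMetricSpace X] (f : X → X) (n : ℕ) (ε : ℝ) : ℕ :=
  sInf {m : ℕ | ∃ s : Finset X, s.card = m ∧ ∀ x : X, ∃ c ∈ s, dynDist f n c x < ε}

/-- The strong polynomial entropy `h_pol(f) = sup_{ε>0} limsup_n log G_n^f(ε) / log n`. -/
noncomputable def hpol {X : Type*} [PseudoMetricSpace X] (f : X → X) : ENNReal :=
  ⨆ ε : {e : ℝ // 0 < e},
    Filter.limsup
      (fun n : ℕ => ENNReal.ofReal (Real.log (coverNum f n (ε : ℝ)) / Real.log n))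
      Filter.atTop

/-- A covering of `X` by dynamical balls `B_{n_i}^f(x_i, ε)` with all orders `n_i ≥ N`. -/
def IsDynCover {X : Type*} [PseudoMetricSpace X] (f : X → X) (ε : ℝ) (N : ℕ)
    (C : Set (X × ℕ)) : Prop :=
  (∀ p ∈ C, N ≤ p.2) ∧ ∀ x : X, ∃ p ∈ C, dynDist f p.2 p.1 x < ε

/-- The weight `M(C,s) = Σ_i n_i^{-s}` of a covering by dynamical balls. -/
noncomputable def covWeight {X : Type*} (C : Set (X × ℕ)) (s : ℝ) : ENNReal :=
  ∑' p : C, ((p : X × ℕ).2 : ENNReal) ^ (-s)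

/-- `Δ^f(ε,s) = sup_{N ≥ 1} inf { M(C,s) | C a covering by dynamical balls of orders ≥ N }`. -/
noncomputable def dynDelta {X : Type*} [PseudoMetricSpace X] (f : X → X) (ε s : ℝ) : ENNReal :=
  ⨆ N : ℕ, ⨅ C : {C : Set (X × ℕ) // IsDynCover f ε (N + 1) C}, covWeight (C : Set (X × ℕ)) s

/-- The critical exponent `s_c^f(ε)`, i.e. the supremum of the `s ≥ 0` with `Δ^f(ε,s) = ∞`. -/
noncomputable def scrit {X : Type*} [PseudoMetricSpace X] (f : X → X) (ε : ℝ) : ENNReal :=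
  sSup {x : ENNReal | ∃ s : ℝ, 0 ≤ s ∧ x = ENNReal.ofReal s ∧ dynDelta f ε s = ⊤}

/-- The weak polynomial entropy `h_pol^*(f) = sup_{ε>0} s_c^f(ε)`. -/
noncomputable def hpolStar {X : Type*} [PseudoMetricSpace X] (f : X → X) : ENNReal :=
  ⨆ ε : {e : ℝ // 0 < e}, scrit f (ε : ℝ)

section Aux

variable {X : Type*} [MetricSpace X] [CompactSpace X]

lemma dynDist_self (f : X → X) (n : ℕ) (x : X) : dynDist f n x x = 0 := by
  simp [dynDist]

lemma dynDist_lt_iff (f : X → X) (n : ℕ) (x y : X) {ε : ℝ} (hε : 0 < ε) :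
    dynDist f n x y < ε ↔ ∀ k ∈ Finset.range n, dist (f^[k] x) (f^[k] y) < ε := by
  have hbot : (⊥ : NNReal) < ⟨ε, hε.le⟩ := by exact_mod_cast hε
  constructor
  · intro h k hk
    have h' : ((Finset.range n).sup fun k => nndist (f^[k] x) (f^[k] y))
        < (⟨ε, hε.le⟩ : NNReal) := by exact_mod_cast h
    have := (Finset.sup_lt_iff hbot).1 h' k hk
    rw [dist_nndist]
    exact_mod_cast this
  · intro h
    have h' : ((Finset.range n).sup fun k => nndist (f^[k] x) (f^[k] y))
        < (⟨ε, hε.le⟩ : NNReal) := by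
      refine (Finset.sup_lt_iff hbot).2 fun k hk => ?_
      have hh := h k hk
      rw [dist_nndist] at hh
      exact_mod_cast hh
    exact_mod_cast h'

lemma exists_dynCover (f : X → X) (hf : Continuous f) (n : ℕ) {ε : ℝ} (hε : 0 < ε) :
    ∃ s : Finset X, ∀ x : X, ∃ c ∈ s, dynDist f n c x < ε := by
  have hopen : ∀ c : X, IsOpen {y | dynDist f n c y < ε} := by
    intro c
    have heq : {y | dynDist f n c y < ε}
        = ⋂ k ∈ Finset.range n, (f^[k]) ⁻¹' (ball (f^[k] c) ε) := by
      ext y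
      simp only [mem_setOf_eq, dynDist_lt_iff f n c y hε, mem_iInter, mem_preimage, mem_ball]
      constructor
      · intro h k hk; rw [dist_comm]; exact h k hk
      · intro h k hk; rw [dist_comm]; exact h k hk
    rw [heq]
    exact isOpen_biInter_finset fun k _ => isOpen_ball.preimage (hf.iterate k)
  have hmem : ∀ c : X, c ∈ {y | dynDist f n c y < ε} := fun c => by
    simp only [mem_setOf_eq, dynDist_self]; exact hε
  obtain ⟨s, hs⟩ := isCompact_univ.elim_finite_subcover
      (fun c : X => {y | dynDist f n c y < ε}) hopen
      (fun x _ => mem_iUnion.2 ⟨x, hmem x⟩)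
  refine ⟨s, fun x => ?_⟩
  obtain ⟨c, hc, hx⟩ := mem_iUnion₂.1 (hs (mem_univ x))
  exact ⟨c, hc, hx⟩

lemma coverNum_spec (f : X → X) (hf : Continuous f) (n : ℕ) {ε : ℝ} (hε : 0 < ε) :
    ∃ s : Finset X, s.card = coverNum f n ε ∧ ∀ x : X, ∃ c ∈ s, dynDist f n c x < ε := by
  obtain ⟨s, hs⟩ := exists_dynCover f hf n hε
  have hne : {m : ℕ | ∃ s : Finset X, s.card = m ∧
      ∀ x : X, ∃ c ∈ s, dynDist f n c x < ε}.Nonempty := ⟨s.card, s, rfl, hs⟩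
  obtain ⟨s', hcard, hcov⟩ := Nat.sInf_mem hne
  exact ⟨s', hcard, hcov⟩

end Aux

/-- For a continuous map on a compact metric space, the weak polynomial entropy is at most
the strong polynomial entropy: `h_pol^*(f) ≤ h_pol(f)`. -/
theorem stmt1 {X : Type*} [MetricSpace X] [CompactSpace X] (f : X → X) (hf : Continuous f) :
    hpolStar f ≤ hpol f := by
  classical
  rw [hpolStar]
  apply iSup_le
  rintro ⟨ε, hε⟩
  rw [scrit]
  apply sSup_le
  rintro x ⟨s, hs0, rfl, hΔ⟩
  rcases isEmpty_or_nonempty X with hX | hX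
  · -- empty space: Δ = 0, contradiction with Δ = ⊤
    exfalso
    have hle : dynDelta f ε s ≤ 0 := by
      apply iSup_le
      intro N
      have hcov : IsDynCover f ε (N + 1) (∅ : Set (X × ℕ)) :=
        ⟨fun p hp => hp.elim, fun x => isEmptyElim x⟩
      refine (iInf_le _ ⟨∅, hcov⟩).trans (le_of_eq ?_)
      rw [covWeight]
      exact tsum_empty
    rw [hΔ] at hle
    exact (ENNReal.top_ne_zero (le_antisymm hle zero_le))
  by_contra hlt
  push_neg at hlt
  have hls : Filter.limsup
      (fun n : ℕ => ENNReal.ofReal (Real.log (coverNum f n (ε : ℝ)) / Real.log n))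
      Filter.atTop < ENNReal.ofReal s :=
    lt_of_le_of_lt (le_iSup (fun e : {e : ℝ // 0 < e} =>
      Filter.limsup
        (fun n : ℕ => ENNReal.ofReal (Real.log (coverNum f n (e : ℝ)) / Real.log n))
        Filter.atTop) ⟨ε, hε⟩) hlt
  obtain ⟨b, hb1, hb2⟩ := exists_between hls
  have hbt : b ≠ ⊤ := (lt_of_lt_of_le hb2 le_top).ne
  set t := b.toReal with ht
  have hts : t < s := by
    have := ENNReal.lt_ofReal_iff_toReal_lt hbt |>.1 hb2
    exact this
  have hb : b = ENNReal.ofReal t := (ENNReal.ofReal_toReal hbt).symm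
  have hev : ∀ᶠ n : ℕ in Filter.atTop,
      ENNReal.ofReal (Real.log (coverNum f n (ε : ℝ)) / Real.log n) < b :=
    Filter.eventually_lt_of_limsup_lt hb1
  obtain ⟨n₀, hn₀⟩ := Filter.eventually_atTop.1 hev
  -- show Δ ≤ 1
  have hΔle : dynDelta f ε s ≤ 1 := by
    rw [dynDelta]
    apply iSup_le
    intro N
    set n : ℕ := max (N + 1) (max n₀ 2) with hn
    have hnN : N + 1 ≤ n := le_max_left _ _
    have hn0 : n₀ ≤ n := le_trans (le_max_left _ _) (le_max_right _ _)
    have hn2 : 2 ≤ n := le_trans (le_max_right _ _) (le_max_right _ _)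
    have hn1 : (1 : ℝ) < (n : ℝ) := by exact_mod_cast lt_of_lt_of_le one_lt_two hn2
    obtain ⟨sF, hcard, hcov⟩ := coverNum_spec f hf n hε
    have hGpos : 0 < coverNum f n (ε : ℝ) := by
      obtain ⟨x⟩ := hX
      obtain ⟨c, hc, _⟩ := hcov x
      rw [← hcard]
      exact Finset.card_pos.2 ⟨c, hc⟩
    -- logarithmic bound
    have hun := hn₀ n hn0
    have hbpos : 0 < b := lt_of_le_of_lt zero_le hun
    have htpos : 0 < t := ENNReal.toReal_pos hbpos.ne' hbt
    rw [hb] at hun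
    have hlog : Real.log (coverNum f n (ε : ℝ)) / Real.log n < t :=
      (ENNReal.ofReal_lt_ofReal_iff htpos).1 hun
    have hlogn : 0 < Real.log n := Real.log_pos hn1
    have hGle : (coverNum f n (ε : ℝ) : ℝ) ≤ (n : ℝ) ^ t := by
      have h1 : Real.log (coverNum f n (ε : ℝ)) < t * Real.log n := (div_lt_iff₀ hlogn).1 hlog
      have hGR : (0 : ℝ) < (coverNum f n (ε : ℝ) : ℝ) := by exact_mod_cast hGpos
      calc (coverNum f n (ε : ℝ) : ℝ)
          = Real.exp (Real.log (coverNum f n (ε : ℝ))) := (Real.exp_log hGR).symm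
        _ ≤ Real.exp (t * Real.log n) := (Real.exp_le_exp.2 h1.le)
        _ = (n : ℝ) ^ t := by
            rw [Real.rpow_def_of_pos (by linarith : (0:ℝ) < (n:ℝ)), mul_comm]
    -- build the cover
    set Cf : Finset (X × ℕ) := sF.image (fun c => (c, n)) with hCf
    have hCcov : IsDynCover f ε (N + 1) (↑Cf : Set (X × ℕ)) := by
      constructor
      · intro p hp
        simp only [hCf, Finset.coe_image, mem_image, Finset.mem_coe] at hp
        obtain ⟨c, _, rfl⟩ := hp
        exact hnN
      · intro x
        obtain ⟨c, hc, hd⟩ := hcov x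
        exact ⟨(c, n), Finset.mem_coe.2 (Finset.mem_image.2 ⟨c, hc, rfl⟩), hd⟩
    refine (iInf_le _ ⟨↑Cf, hCcov⟩).trans ?_
    rw [covWeight]
    rw [Finset.tsum_subtype' Cf (fun p : X × ℕ => ((p.2 : ℕ) : ENNReal) ^ (-s))]
    have hterm : ∀ p ∈ Cf, ((p.2 : ℕ) : ENNReal) ^ (-s) = ((n : ℕ) : ENNReal) ^ (-s) := by
      intro p hp
      simp only [hCf, Finset.mem_image] at hp
      obtain ⟨c, _, rfl⟩ := hp
      rfl
    rw [Finset.sum_congr rfl hterm, Finset.sum_const, nsmul_eq_mul]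
    have hnne : ((n : ℕ) : ENNReal) ≠ 0 := by
      simp only [ne_eq, Nat.cast_eq_zero]; omega
    have hnnt : ((n : ℕ) : ENNReal) ≠ ⊤ := ENNReal.natCast_ne_top n
    have hcardle : (Cf.card : ENNReal) ≤ ((n : ℕ) : ENNReal) ^ t := by
      calc (Cf.card : ENNReal) ≤ (sF.card : ENNReal) := by
            exact_mod_cast Finset.card_image_le
        _ = ENNReal.ofReal ((coverNum f n (ε : ℝ) : ℝ)) := by
            rw [hcard]; rw [ENNReal.ofReal_natCast]
        _ ≤ ENNReal.ofReal ((n : ℝ) ^ t) := ENNReal.ofReal_le_ofReal hGle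
        _ = ((n : ℕ) : ENNReal) ^ t := by
            rw [← ENNReal.ofReal_rpow_of_pos (by linarith : (0:ℝ) < (n:ℝ)),
              ENNReal.ofReal_natCast]
    calc (Cf.card : ENNReal) * ((n : ℕ) : ENNReal) ^ (-s)
        ≤ ((n : ℕ) : ENNReal) ^ t * ((n : ℕ) : ENNReal) ^ (-s) := by
          exact mul_le_mul_left hcardle _
      _ = ((n : ℕ) : ENNReal) ^ (t + -s) := (ENNReal.rpow_add t (-s) hnne hnnt).symm
      _ ≤ ((n : ℕ) : ENNReal) ^ (0 : ℝ) := by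
          apply ENNReal.rpow_le_rpow_of_exponent_le
          · exact_mod_cast Nat.one_le_iff_ne_zero.2 (by omega)
          · linarith
      _ = 1 := ENNReal.rpow_zero
  exact (lt_of_le_of_lt hΔle ENNReal.one_lt_top).ne hΔ
end

section
/- If F = ∪_{i∈ℕ} F_i where each F_i is closed and invariant under f, then the weak polynomial entropy satisfies h_pol^*(f|_F) = sup_{i∈ℕ} h_pol^*(f|_{F_i}). -/
open Set Filter Metric

/-- A union of invariant sets is invariant. -/
def unionMapsTo {X : Type*} {ι : Sort*} {f : X → X} {A : ι → Set X}
    (h : ∀ i, Set.MapsTo f (A i) (A i)) : Set.MapsTo f (⋃ i, A i) (⋃ i, A i) := by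
  intro x hx
  rcases Set.mem_iUnion.1 hx with ⟨i, hi⟩
  exact Set.mem_iUnion.2 ⟨i, h i hi⟩

section helperaux
variable {X : Type*} [PseudoMetricSpace X] {f : X → X}

lemma dynDist_restrict {s : Set X} (h : Set.MapsTo f s s) (n : ℕ) (x y : s) :
    dynDist (Set.MapsTo.restrict f s s h) n x y = dynDist f n (x : X) (y : X) := by
  unfold dynDist
  congr 1
  refine Finset.sup_congr rfl fun k _ => ?_
  rw [Subtype.nndist_eq, h.coe_iterate_restrict, h.coe_iterate_restrict]

lemma dynDist_comm (n : ℕ) (x y : X) : dynDist f n x y = dynDist f n y x := by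
  unfold dynDist
  congr 1
  exact Finset.sup_congr rfl fun k _ => nndist_comm _ _

lemma dynDist_triangle (n : ℕ) (x y z : X) :
    dynDist f n x z ≤ dynDist f n x y + dynDist f n y z := by
  unfold dynDist
  have : ((Finset.range n).sup fun k => nndist (f^[k] x) (f^[k] z)) ≤
      ((Finset.range n).sup fun k => nndist (f^[k] x) (f^[k] y)) +
      ((Finset.range n).sup fun k => nndist (f^[k] y) (f^[k] z)) := by
    refine Finset.sup_le fun k hk => ?_
    exact (nndist_triangle (f^[k] x) (f^[k] y) (f^[k] z)).trans
      (add_le_add (Finset.le_sup (f := fun k => nndist (f^[k] x) (f^[k] y)) hk)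
        (Finset.le_sup (f := fun k => nndist (f^[k] y) (f^[k] z)) hk))
  exact_mod_cast this
end helperaux

section helperwt

lemma covWeight_image_le {α β : Type*} (g : α × ℕ → β × ℕ) (hg : ∀ p, (g p).2 = p.2)
    (C : Set (α × ℕ)) (s : ℝ) : covWeight (g '' C) s ≤ covWeight C s := by
  unfold covWeight
  have hsurj : Function.Surjective
      (fun p : C => (⟨g p, Set.mem_image_of_mem g p.2⟩ : g '' C)) := by
    rintro ⟨q, ⟨p, hp, rfl⟩⟩; exact ⟨⟨p, hp⟩, rfl⟩
  calc ∑' q : ↥(g '' C), (((q : β × ℕ).2 : ENNReal)) ^ (-s)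
      ≤ ∑' p : C, (((g p).2 : ENNReal)) ^ (-s) :=
        ENNReal.tsum_le_tsum_comp_of_surjective hsurj _
    _ = ∑' p : C, (((p : α × ℕ).2 : ENNReal)) ^ (-s) := tsum_congr fun p => by rw [hg]

lemma nat_rpow_le_nat_rpow {a b : ℕ} (ha : 1 ≤ a) (hab : a ≤ b) {z : ℝ} (hz : z ≤ 0) :
    ((b : ENNReal)) ^ z ≤ ((a : ENNReal)) ^ z := by
  have ha' : ((a : NNReal)) ≠ 0 := by
    simpa using Nat.one_le_iff_ne_zero.1 ha
  have hb' : ((b : NNReal)) ≠ 0 := by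
    simpa using Nat.one_le_iff_ne_zero.1 (ha.trans hab)
  rw [show ((b : ENNReal)) = (((b : NNReal)) : ENNReal) by norm_cast,
    show ((a : ENNReal)) = (((a : NNReal)) : ENNReal) by norm_cast,
    ← ENNReal.coe_rpow_of_ne_zero hb', ← ENNReal.coe_rpow_of_ne_zero ha', ENNReal.coe_le_coe]
  refine NNReal.rpow_le_rpow_of_nonpos ?_ (by exact_mod_cast hab) hz
  exact lt_of_lt_of_le zero_lt_one (by exact_mod_cast ha)

lemma weight_le {m n : ℕ} (hn : m + 1 ≤ n) {t s : ℝ} (hts : t ≤ s) :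
    ((n : ENNReal)) ^ (-s) ≤ (((m + 1 : ℕ) : ENNReal)) ^ (-(s - t)) * ((n : ENNReal)) ^ (-t) := by
  have hn0 : ((n : ENNReal)) ≠ 0 := by
    simpa using Nat.one_le_iff_ne_zero.1 (le_trans (Nat.le_add_left 1 m) hn)
  have hsplit : ((n : ENNReal)) ^ (-s) = ((n : ENNReal)) ^ (-(s - t)) * ((n : ENNReal)) ^ (-t) := by
    rw [← ENNReal.rpow_add _ _ hn0 (ENNReal.natCast_ne_top n)]
    ring_nf
  rw [hsplit]
  exact mul_le_mul_left (nat_rpow_le_nat_rpow (Nat.le_add_left 1 m) hn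
    (neg_nonpos.2 (sub_nonneg.2 hts))) _

lemma covWeight_le_of_orders {α : Type*} {C : Set (α × ℕ)} {m : ℕ}
    (hC : ∀ p ∈ C, m + 1 ≤ p.2) {t s : ℝ} (hts : t ≤ s) :
    covWeight C s ≤ (((m + 1 : ℕ) : ENNReal)) ^ (-(s - t)) * covWeight C t := by
  unfold covWeight
  rw [← ENNReal.tsum_mul_left]
  exact ENNReal.tsum_le_tsum fun p => weight_le (hC p.1 p.2) hts

lemma exists_pow_small {r : ℝ} (hr : 0 < r) {η : ENNReal} (hη : η ≠ 0) (N : ℕ) :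
    ∃ m : ℕ, N ≤ m ∧ (((m + 1 : ℕ) : ENNReal)) ^ (-r) < η := by
  rcases eq_or_ne η ⊤ with rfl | htop
  · refine ⟨N, le_rfl, ?_⟩
    have h1 : (((N + 1 : ℕ) : NNReal)) ≠ 0 := by positivity
    rw [show (((N + 1 : ℕ) : ENNReal)) = ((((N + 1 : ℕ) : NNReal)) : ENNReal) by norm_cast,
      ← ENNReal.coe_rpow_of_ne_zero h1]
    exact ENNReal.coe_lt_top
  · have hto : 0 < η.toReal := ENNReal.toReal_pos hη htop
    have htend : Tendsto (fun n : ℕ => ((n : ℝ)) ^ (-r)) atTop (nhds 0) :=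
      (tendsto_rpow_neg_atTop hr).comp tendsto_natCast_atTop_atTop
    obtain ⟨N₀, hN₀⟩ := eventually_atTop.1 (htend.eventually_lt_const hto)
    refine ⟨max N N₀, le_max_left _ _, ?_⟩
    have hm : N₀ ≤ max N N₀ + 1 := le_trans (le_max_right _ _) (Nat.le_succ _)
    have hreal : (((max N N₀ + 1 : ℕ) : ℝ)) ^ (-r) < η.toReal := hN₀ _ hm
    have hpos : (0 : ℝ) < ((max N N₀ + 1 : ℕ) : ℝ) := by positivity
    calc (((max N N₀ + 1 : ℕ) : ENNReal)) ^ (-r)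
        = ENNReal.ofReal ((((max N N₀ + 1 : ℕ) : ℝ)) ^ (-r)) := by
          rw [← ENNReal.ofReal_rpow_of_pos hpos, ENNReal.ofReal_natCast]
      _ < ENNReal.ofReal η.toReal := (ENNReal.ofReal_lt_ofReal_iff hto).2 hreal
      _ = η := ENNReal.ofReal_toReal htop

end helperwt

section helpermain
variable {X : Type*} [MetricSpace X] {f : X → X}

lemma dynDelta_mono_sub {s t : Set X} (hst : s ⊆ t) (hs : Set.MapsTo f s s)
    (ht : Set.MapsTo f t t) {e : ℝ} (σ : ℝ) :
    dynDelta (Set.MapsTo.restrict f s s hs) e σ ≤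
      dynDelta (Set.MapsTo.restrict f t t ht) (e / 2) σ := by
  classical
  refine iSup_mono fun N => le_iInf fun C' => ?_
  obtain ⟨C', hC'⟩ := C'
  by_cases hemp : Nonempty s
  · let g : ↥t × ℕ → ↥s × ℕ := fun p =>
      ⟨if h : ∃ y : s, dynDist f p.2 (p.1 : X) (y : X) < e / 2 then h.choose
        else Classical.arbitrary s, p.2⟩
    have hcov : IsDynCover (Set.MapsTo.restrict f s s hs) e (N + 1) (g '' C') := by
      constructor
      · rintro q ⟨p, hp, rfl⟩
        exact hC'.1 p hp
      · intro x
        obtain ⟨p, hp, hd⟩ := hC'.2 ⟨(x : X), hst x.2⟩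
        rw [dynDist_restrict] at hd
        have hex : ∃ y : s, dynDist f p.2 (p.1 : X) (y : X) < e / 2 := ⟨x, hd⟩
        refine ⟨g p, Set.mem_image_of_mem g hp, ?_⟩
        have hgp : (g p).1 = hex.choose := by simp only [g, dif_pos hex]
        rw [dynDist_restrict]
        have h1 : dynDist f p.2 ((hex.choose : s) : X) (p.1 : X) < e / 2 := by
          rw [dynDist_comm]; exact hex.choose_spec
        calc dynDist f (g p).2 ((g p).1 : X) (x : X)
            = dynDist f p.2 ((hex.choose : s) : X) (x : X) := by rw [hgp]
          _ ≤ dynDist f p.2 ((hex.choose : s) : X) (p.1 : X) +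
              dynDist f p.2 (p.1 : X) (x : X) := dynDist_triangle _ _ _ _
          _ < e / 2 + e / 2 := add_lt_add h1 hd
          _ = e := add_halves e
    exact iInf_le_of_le ⟨g '' C', hcov⟩ (covWeight_image_le g (fun p => rfl) C' σ)
  · have hcov : IsDynCover (Set.MapsTo.restrict f s s hs) e (N + 1) (∅ : Set (↥s × ℕ)) := by
      constructor
      · intro p hp; simp at hp
      · intro x; exact absurd ⟨x⟩ hemp
    refine iInf_le_of_le ⟨∅, hcov⟩ ?_
    have : covWeight (∅ : Set (↥s × ℕ)) σ = 0 := by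
      unfold covWeight
      rw [ENNReal.summable.tsum_eq_zero_iff]
      rintro ⟨p, hp⟩
      simp at hp
    simp [this]
end helpermain

/-- σ-union property of the weak polynomial entropy: if `F = ⋃_{i∈ℕ} Fᵢ` with each `Fᵢ`
closed and `f`-invariant (and `F` compact and invariant), then
`h_pol^*(f|_F) = sup_i h_pol^*(f|_{Fᵢ})`. -/
theorem stmt7 {X : Type*} [MetricSpace X] [CompactSpace X] (f : X → X) (hf : Continuous f)
    (F : ℕ → Set X) (hcl : ∀ i, IsClosed (F i)) (hinv : ∀ i, Set.MapsTo f (F i) (F i))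
    (hFcomp : IsCompact (⋃ i, F i)) :
    hpolStar (Set.MapsTo.restrict f (⋃ i, F i) (⋃ i, F i) (unionMapsTo hinv)) =
      ⨆ i : ℕ, hpolStar (Set.MapsTo.restrict f (F i) (F i) (hinv i)) := by
  classical
  set U : Set X := ⋃ i, F i with hU
  set fU := Set.MapsTo.restrict f U U (unionMapsTo hinv) with hfU
  set fi := fun i => Set.MapsTo.restrict f (F i) (F i) (hinv i) with hfi
  refine le_antisymm ?_ ?_
  · -- hard direction: hpolStar fU ≤ ⨆ i, hpolStar (fi i)
    refine iSup_le fun ε => ?_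
    obtain ⟨e, he⟩ := ε
    refine sSup_le ?_
    rintro x ⟨s, hs0, rfl, hΔ⟩
    by_contra hx
    push_neg at hx
    have hxS : (⨆ i, hpolStar (fi i)) < ENNReal.ofReal s := hx
    obtain ⟨u, hu1, hu2⟩ := exists_between hxS
    have hut : u ≠ ⊤ := (hu2.trans ENNReal.ofReal_lt_top).ne
    set t := u.toReal with htdef
    have hu' : ENNReal.ofReal t = u := ENNReal.ofReal_toReal hut
    have ht0 : 0 ≤ t := ENNReal.toReal_nonneg
    have hts : t < s := by
      by_contra hc
      push_neg at hc
      exact absurd (le_trans (ENNReal.ofReal_le_ofReal hc) hu'.le) (not_le.2 hu2)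
    have hΔt : ∀ i, dynDelta (fi i) e t ≠ ⊤ := by
      intro i h
      have h1 : ENNReal.ofReal t ≤ scrit (fi i) e := le_sSup ⟨t, ht0, rfl, h⟩
      have h2 : scrit (fi i) e ≤ ⨆ i, hpolStar (fi i) :=
        le_trans (le_iSup (fun ε : {x : ℝ // 0 < x} => scrit (fi i) (ε : ℝ)) ⟨e, he⟩)
          (le_iSup (fun i => hpolStar (fi i)) i)
      exact absurd (h1.trans h2) (not_le.2 (hu' ▸ hu1))
    -- show dynDelta fU e s ≤ 1, contradicting hΔ
    have hbound : dynDelta fU e s ≤ 1 := by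
      refine iSup_le fun N => ?_
      have key : ∀ i : ℕ, ∃ D : Set (↥(F i) × ℕ), IsDynCover (fi i) e (N + 1) D ∧
          covWeight D s ≤ ((2 : ENNReal)⁻¹) ^ (i + 1) := by
        intro i
        set K : ENNReal := dynDelta (fi i) e t + 1 with hK
        have hKtop : K ≠ ⊤ := ENNReal.add_ne_top.2 ⟨hΔt i, ENNReal.one_ne_top⟩
        have hK0 : K ≠ 0 := by
          simp [hK]
        set c : ENNReal := ((2 : ENNReal)⁻¹) ^ (i + 1) with hc
        have hc0 : c ≠ 0 := pow_ne_zero _ (ENNReal.inv_ne_zero.2 (by simp))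
        have hη0 : c / K ≠ 0 := by
          rw [ENNReal.div_eq_inv_mul]
          exact mul_ne_zero (ENNReal.inv_ne_zero.2 hKtop) hc0
        obtain ⟨m, hmN, hm⟩ := exists_pow_small (sub_pos.2 hts) hη0 N
        have hlt : (⨅ C : {C : Set (↥(F i) × ℕ) // IsDynCover (fi i) e (m + 1) C},
            covWeight (C : Set (↥(F i) × ℕ)) t) < K := by
          refine lt_of_le_of_lt ?_ (ENNReal.lt_add_right (hΔt i) one_ne_zero)
          exact le_iSup (fun N => ⨅ C : {C : Set (↥(F i) × ℕ) //
            IsDynCover (fi i) e (N + 1) C}, covWeight (C : Set (↥(F i) × ℕ)) t) m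
        obtain ⟨⟨D, hD⟩, hDw⟩ := iInf_lt_iff.1 hlt
        refine ⟨D, ⟨fun p hp => le_trans (by omega) (hD.1 p hp), hD.2⟩, ?_⟩
        calc covWeight D s ≤ (((m + 1 : ℕ) : ENNReal)) ^ (-(s - t)) * covWeight D t :=
              covWeight_le_of_orders hD.1 hts.le
          _ ≤ (c / K) * K := by
              exact mul_le_mul' hm.le hDw.le
          _ = c := ENNReal.div_mul_cancel hK0 hKtop
      choose D hD hDw using key
      let emb : ∀ i : ℕ, ↥(F i) × ℕ → ↥U × ℕ := fun i q =>
        ⟨⟨(q.1 : X), Set.mem_iUnion.2 ⟨i, q.1.2⟩⟩, q.2⟩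
      have hcov : IsDynCover fU e (N + 1) (⋃ i, emb i '' D i) := by
        constructor
        · intro p hp
          obtain ⟨i, hi⟩ := Set.mem_iUnion.1 hp
          obtain ⟨q, hq, rfl⟩ := hi
          exact (hD i).1 q hq
        · intro x
          obtain ⟨i, hxi⟩ := Set.mem_iUnion.1 x.2
          obtain ⟨q, hq, hqd⟩ := (hD i).2 ⟨(x : X), hxi⟩
          rw [dynDist_restrict] at hqd
          refine ⟨emb i q, Set.mem_iUnion.2 ⟨i, Set.mem_image_of_mem _ hq⟩, ?_⟩
          rw [dynDist_restrict]
          exact hqd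
      refine iInf_le_of_le ⟨_, hcov⟩ ?_
      calc covWeight (⋃ i, emb i '' D i) s
          = ∑' p : ↥(⋃ i, emb i '' D i), (((p : ↥U × ℕ).2 : ENNReal)) ^ (-s) := rfl
        _ ≤ ∑' i, ∑' p : ↥(emb i '' D i), (((p : ↥U × ℕ).2 : ENNReal)) ^ (-s) :=
            ENNReal.tsum_iUnion_le_tsum (fun p : ↥U × ℕ => ((p.2 : ENNReal)) ^ (-s)) _
        _ = ∑' i, covWeight (emb i '' D i) s := rfl
        _ ≤ ∑' i, covWeight (D i) s :=
            ENNReal.tsum_le_tsum fun i => covWeight_image_le (emb i) (fun q => rfl) _ _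
        _ ≤ ∑' i : ℕ, ((2 : ENNReal)⁻¹) ^ (i + 1) := ENNReal.tsum_le_tsum hDw
        _ = 2⁻¹ * (1 - 2⁻¹)⁻¹ := ENNReal.tsum_geometric_add_one _
        _ = 1 := by
            rw [ENNReal.one_sub_inv_two]
            exact ENNReal.mul_inv_cancel (by simp) (by simp)
    rw [hΔ] at hbound
    simp at hbound
  · -- easy direction
    refine iSup_le fun i => ?_
    have : hpolStar (fi i) = ⨆ ε : {x : ℝ // 0 < x}, scrit (fi i) (ε : ℝ) := rfl
    rw [this]
    refine iSup_le fun ε => ?_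
    obtain ⟨e, he⟩ := ε
    unfold scrit
    refine sSup_le ?_
    intro x hx
    simp only [Set.mem_setOf_eq] at hx
    obtain ⟨σ, hσ, hxe, hΔi⟩ := hx
    subst hxe
    have h1 : dynDelta (fi i) e σ ≤ dynDelta fU (e / 2) σ :=
      dynDelta_mono_sub (Set.subset_iUnion F i) (hinv i) (unionMapsTo hinv) σ
    have h2 : dynDelta fU (e / 2) σ = ⊤ := top_le_iff.1 (hΔi ▸ h1)
    have h3 : ENNReal.ofReal σ ≤ scrit fU (e / 2) := le_sSup ⟨σ, hσ, rfl, h2⟩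
    exact h3.trans (le_iSup (fun ε : {x : ℝ // 0 < x} => scrit fU (ε : ℝ)) ⟨e / 2, by positivity⟩)
end

section
/- If (E,φ) admits a contracting fibered structure over (X,ψ), then h_pol(φ) = h_pol(ψ). -/
open Set Filter Metric

section Aux
variable {Y : Type*} [MetricSpace Y] {f : Y → Y} {n : ℕ} {ε : ℝ}

lemma HL8_dist_le_dynDist {k : ℕ} (hk : k < n) (x y : Y) :
    dist (f^[k] x) (f^[k] y) ≤ dynDist f n x y := by
  have h : nndist (f^[k] x) (f^[k] y) ≤
      (Finset.range n).sup fun k => nndist (f^[k] x) (f^[k] y) :=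
    Finset.le_sup (f := fun k => nndist (f^[k] x) (f^[k] y)) (Finset.mem_range.2 hk)
  rw [dist_nndist, dynDist]
  exact_mod_cast h

lemma HL8_dynDist_lt_iff (hε : 0 < ε) {x y : Y} :
    dynDist f n x y < ε ↔ ∀ k < n, dist (f^[k] x) (f^[k] y) < ε := by
  constructor
  · intro h k hk
    exact lt_of_le_of_lt (HL8_dist_le_dynDist hk x y) h
  · intro h
    rw [dynDist, ← Real.coe_toNNReal ε hε.le, NNReal.coe_lt_coe,
      Finset.sup_lt_iff (by simpa using Real.toNNReal_pos.2 hε)]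
    intro k hk
    rw [← NNReal.coe_lt_coe, coe_nndist, Real.coe_toNNReal _ hε.le]
    exact h k (Finset.mem_range.1 hk)

lemma HL8_dynDist_triangle (f : Y → Y) (n : ℕ) (x y z : Y) :
    dynDist f n x z ≤ dynDist f n x y + dynDist f n y z := by
  rw [dynDist, dynDist, dynDist, ← NNReal.coe_add, NNReal.coe_le_coe]
  exact Finset.sup_le fun k hk => le_trans (nndist_triangle _ (f^[k] y) _)
    (add_le_add (Finset.le_sup (f := fun k => nndist (f^[k] x) (f^[k] y)) hk)
      (Finset.le_sup (f := fun k => nndist (f^[k] y) (f^[k] z)) hk))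

lemma HL8_dynDist_comm (f : Y → Y) (n : ℕ) (x y : Y) :
    dynDist f n x y = dynDist f n y x := by
  simp [dynDist, nndist_comm]

lemma HL8_unif [CompactSpace Y] (hf : Continuous f) (n : ℕ) (hε : 0 < ε) :
    ∃ δ > 0, ∀ x y : Y, dist x y < δ → dynDist f n x y < ε := by
  obtain ⟨δ, hδ, H⟩ : ∃ δ > 0, ∀ k < n, ∀ x y : Y, dist x y < δ →
      dist (f^[k] x) (f^[k] y) < ε := by
    induction n with
    | zero => exact ⟨1, one_pos, by omega⟩
    | succ n ih =>
      obtain ⟨δ₁, hδ₁, H₁⟩ := ih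
      obtain ⟨δ₂, hδ₂, H₂⟩ := Metric.uniformContinuous_iff.1
        (CompactSpace.uniformContinuous_of_continuous (hf.iterate n)) ε hε
      refine ⟨min δ₁ δ₂, lt_min hδ₁ hδ₂, fun k hk x y hxy => ?_⟩
      rcases Nat.lt_succ_iff_lt_or_eq.1 hk with h | rfl
      · exact H₁ k h x y (hxy.trans_le (min_le_left _ _))
      · exact H₂ (hxy.trans_le (min_le_right _ _))
  exact ⟨δ, hδ, fun x y h => (HL8_dynDist_lt_iff hε).2 fun k hk => H k hk x y h⟩

lemma HL8_exists_cover [CompactSpace Y] (hf : Continuous f) (n : ℕ) (hε : 0 < ε) :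
    ∃ s : Finset Y, ∀ x : Y, ∃ c ∈ s, dynDist f n c x < ε := by
  obtain ⟨δ, hδ, H⟩ := HL8_unif hf n hε
  obtain ⟨t, -, htf, htc⟩ :=
    finite_cover_balls_of_compact (isCompact_univ : IsCompact (univ : Set Y)) hδ
  refine ⟨htf.toFinset, fun x => ?_⟩
  obtain ⟨c, hc, hxc⟩ := mem_iUnion₂.1 (htc (mem_univ x))
  exact ⟨c, htf.mem_toFinset.2 hc, H c x (by rw [dist_comm]; exact mem_ball.1 hxc)⟩

lemma HL8_coverNum_spec [CompactSpace Y] (hf : Continuous f) (n : ℕ) (hε : 0 < ε) :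
    ∃ s : Finset Y, s.card = coverNum f n ε ∧ ∀ x : Y, ∃ c ∈ s, dynDist f n c x < ε := by
  have hne : {m : ℕ | ∃ s : Finset Y, s.card = m ∧
      ∀ x : Y, ∃ c ∈ s, dynDist f n c x < ε}.Nonempty :=
    let ⟨s, hs⟩ := HL8_exists_cover hf n hε; ⟨s.card, s, rfl, hs⟩
  exact Nat.sInf_mem hne

lemma HL8_coverNum_le {s : Finset Y} (hs : ∀ x : Y, ∃ c ∈ s, dynDist f n c x < ε) :
    coverNum f n ε ≤ s.card := Nat.sInf_le ⟨s, rfl, hs⟩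

lemma HL8_coverNum_pos [CompactSpace Y] [Nonempty Y] (hf : Continuous f) (n : ℕ) (hε : 0 < ε) :
    0 < coverNum f n ε := by
  obtain ⟨s, hs1, hs2⟩ := HL8_coverNum_spec hf n hε
  obtain ⟨c, hc, -⟩ := hs2 (Classical.arbitrary Y)
  rw [← hs1]
  exact Finset.card_pos.2 ⟨c, hc⟩

lemma HL8_coverNum_empty [IsEmpty Y] (f : Y → Y) (n : ℕ) (ε : ℝ) : coverNum f n ε = 0 :=
  Nat.sInf_eq_zero.2 (Or.inl ⟨∅, Finset.card_empty, fun x => isEmptyElim x⟩)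

lemma HL8_hpol_empty [IsEmpty Y] (f : Y → Y) : hpol f = 0 := by
  simp [hpol, HL8_coverNum_empty, limsup_const]

end Aux

lemma HL8_limsup_le {u v : ℕ → ENNReal}
    (h : ∀ η : ℝ, 0 < η → ∀ᶠ n in atTop, u n ≤ ENNReal.ofReal η + v n) :
    limsup u atTop ≤ limsup v atTop := by
  refine ENNReal.le_of_forall_pos_le_add fun ε hε hB => ?_
  set B := limsup v atTop with hBdef
  set c := ENNReal.ofReal ((ε : ℝ) / 2) with hc
  have hc0 : c ≠ 0 := by
    simp only [hc, ne_eq, ENNReal.ofReal_eq_zero, not_le]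
    positivity
  have h2 : ∀ᶠ n in atTop, v n < B + c :=
    eventually_lt_of_limsup_lt (ENNReal.lt_add_right hB.ne hc0)
  have h1 := h ((ε : ℝ) / 2) (by positivity)
  refine limsup_le_of_le (by isBoundedDefault) ?_
  filter_upwards [h1, h2] with n hn1 hn2
  have hcc : c + c = (ε : ENNReal) := by
    rw [hc, ← ENNReal.ofReal_add (by positivity) (by positivity), add_halves]
    exact ENNReal.ofReal_coe_nnreal
  calc u n ≤ c + v n := hn1
    _ ≤ c + (B + c) := add_le_add_right hn2.le c
    _ = B + (c + c) := by ring
    _ = B + ε := by rw [hcc]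

/-- If `(E,φ)` admits a contracting fibered structure over `(X,ψ)`, then
`h_pol(φ) = h_pol(ψ)`. -/
theorem stmt8 {E X F : Type*} [MetricSpace E] [CompactSpace E] [MetricSpace X] [CompactSpace X]
    [MetricSpace F]
    (φ : E → E) (ψ : X → X) (hφ : Continuous φ) (hψ : Continuous ψ)
    (π : E → X) (hπc : Continuous π) (hπs : Function.Surjective π)
    (m : ℕ) (U : Fin m → Set X) (hUo : ∀ i, IsOpen (U i)) (hUcov : (⋃ i, U i) = Set.univ)
    (tr : ∀ i, (π ⁻¹' (U i) : Set E) → (U i × F))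
    (htr_iso : ∀ i, Isometry (tr i)) (htr_surj : ∀ i, Function.Surjective (tr i))
    (htr_fst : ∀ i (z : (π ⁻¹' (U i) : Set E)), ((tr i z).1 : X) = π (z : E))
    (hsemi : ψ ∘ π = π ∘ φ)
    (hcontract : ∀ i j (z z' : E) (hz : z ∈ π ⁻¹' (U i)) (hz' : z' ∈ π ⁻¹' (U i))
      (hfz : φ z ∈ π ⁻¹' (U j)) (hfz' : φ z' ∈ π ⁻¹' (U j)),
      dist (tr j ⟨φ z, hfz⟩).2 (tr j ⟨φ z', hfz'⟩).2 ≤ dist (tr i ⟨z, hz⟩).2 (tr i ⟨z', hz'⟩).2) :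
    hpol φ = hpol ψ := by
  classical
  rcases isEmpty_or_nonempty X with hX | hX
  · have hE : IsEmpty E := ⟨fun z => hX.elim' (π z)⟩
    rw [HL8_hpol_empty φ, HL8_hpol_empty ψ]
  · have hEne : Nonempty E := ⟨(hπs (Classical.arbitrary X)).choose⟩
    have hsemic : Function.Semiconj π φ ψ := fun w => (congrFun hsemi w).symm
    have hsc : ∀ (k : ℕ) (z : E), π (φ^[k] z) = ψ^[k] (π z) := fun k z =>
      (hsemic.iterate_right k) z
    apply le_antisymm
    · -- hpol φ ≤ hpol ψ
      obtain ⟨ρ, hρ, hleb⟩ := lebesgue_number_lemma_of_metric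
        (isCompact_univ : IsCompact (univ : Set X)) hUo (by rw [hUcov])
      refine iSup_le fun ε0 => ?_
      obtain ⟨ε, hε⟩ := ε0
      set δ : ℝ := min ρ ε with hδdef
      have hδ : 0 < δ := lt_min hρ hε
      have hδρ : δ ≤ ρ := min_le_left _ _
      have hδε : δ ≤ ε := min_le_right _ _
      have key : ∀ (n : ℕ) (z z' : E), dynDist ψ n (π z) (π z') < δ → dist z z' < δ →
          dynDist φ n z z' < ε := by
        intro n z z' h1 h2
        have hmem : ∀ k, k < n → ∃ i, φ^[k] z ∈ π ⁻¹' (U i) ∧ φ^[k] z' ∈ π ⁻¹' (U i) := by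
          intro k hk
          obtain ⟨i, hi⟩ := hleb (ψ^[k] (π z)) (mem_univ _)
          refine ⟨i, ?_, ?_⟩
          · show π (φ^[k] z) ∈ U i
            rw [hsc]
            exact hi (mem_ball_self hρ)
          · show π (φ^[k] z') ∈ U i
            rw [hsc]
            apply hi
            rw [mem_ball, dist_comm]
            exact lt_of_lt_of_le ((HL8_dynDist_lt_iff hδ).1 h1 k hk) hδρ
        have hfl : ∀ j (a b : (π ⁻¹' (U j) : Set E)),
            dist (tr j a).2 (tr j b).2 ≤ dist (a : E) (b : E) := by
          intro j a b
          calc dist (tr j a).2 (tr j b).2 ≤ dist (tr j a) (tr j b) := by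
                rw [Prod.dist_eq]; exact le_max_right _ _
            _ = dist (a : E) (b : E) := by rw [(htr_iso j).dist_eq, Subtype.dist_eq]
        have fib : ∀ k, k < n → ∀ (w w' : E), w = φ^[k] z → w' = φ^[k] z' →
            ∀ j (hwj : w ∈ π ⁻¹' (U j)) (hwj' : w' ∈ π ⁻¹' (U j)),
            dist (tr j ⟨w, hwj⟩).2 (tr j ⟨w', hwj'⟩).2 ≤ dist z z' := by
          intro k
          induction k with
          | zero =>
            intro _ w w' hw hw' j hwj hwj'
            simp only [Function.iterate_zero_apply] at hw hw'
            subst hw; subst hw'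
            exact hfl j ⟨_, hwj⟩ ⟨_, hwj'⟩
          | succ k ih =>
            intro hk w w' hw hw' j hwj hwj'
            have hk' : k < n := Nat.lt_of_succ_lt hk
            obtain ⟨i, hzi, hzi'⟩ := hmem k hk'
            rw [Function.iterate_succ_apply'] at hw hw'
            subst hw; subst hw'
            exact le_trans (hcontract i j (φ^[k] z) (φ^[k] z') hzi hzi' hwj hwj')
              (ih hk' _ _ rfl rfl i hzi hzi')
        refine (HL8_dynDist_lt_iff hε).2 fun k hk => ?_
        obtain ⟨i, hzi, hzi'⟩ := hmem k hk
        have heq : dist (φ^[k] z) (φ^[k] z') =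
            dist (tr i ⟨φ^[k] z, hzi⟩) (tr i ⟨φ^[k] z', hzi'⟩) := by
          rw [(htr_iso i).dist_eq, Subtype.dist_eq]
        rw [heq, Prod.dist_eq]
        refine max_lt ?_ ?_
        · rw [Subtype.dist_eq, htr_fst, htr_fst, hsc, hsc]
          exact lt_of_lt_of_le ((HL8_dynDist_lt_iff hδ).1 h1 k hk) hδε
        · exact lt_of_le_of_lt (fib k hk _ _ rfl rfl i hzi hzi') (lt_of_lt_of_le h2 hδε)
      -- covering comparison
      obtain ⟨T0, -, hT0f, hT0c⟩ := finite_cover_balls_of_compact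
        (isCompact_univ : IsCompact (univ : Set E)) (half_pos hδ)
      set T := hT0f.toFinset with hT
      have hcovn : ∀ n, coverNum φ n ε ≤ T.card * coverNum ψ n (δ/2) := by
        intro n
        obtain ⟨s, hscard, hscov⟩ := HL8_coverNum_spec hψ n (half_pos hδ)
        set c : X × E → E := fun p =>
          if h : ∃ w : E, dynDist ψ n p.1 (π w) < δ/2 ∧ dist p.2 w < δ/2 then h.choose
          else Classical.arbitrary E with hcdef
        have hcov2 : ∀ z : E, ∃ w ∈ (s ×ˢ T).image c, dynDist φ n w z < ε := by
          intro z
          obtain ⟨x, hx, hx2⟩ := hscov (π z)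
          obtain ⟨t, ht, htz⟩ := mem_iUnion₂.1 (hT0c (mem_univ z))
          have hex : ∃ w : E, dynDist ψ n x (π w) < δ/2 ∧ dist t w < δ/2 :=
            ⟨z, hx2, by rw [dist_comm]; exact mem_ball.1 htz⟩
          have htT : t ∈ T := hT0f.mem_toFinset.2 ht
          refine ⟨c (x, t), Finset.mem_image_of_mem c
            (Finset.mem_product.2 ⟨hx, htT⟩), ?_⟩
          have hw : dynDist ψ n x (π (c (x, t))) < δ/2 ∧ dist t (c (x, t)) < δ/2 := by
            simp only [hcdef, dif_pos hex]
            exact hex.choose_spec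
          apply key n _ z ?_ ?_
          · calc dynDist ψ n (π (c (x, t))) (π z)
                ≤ dynDist ψ n (π (c (x, t))) x + dynDist ψ n x (π z) :=
                  HL8_dynDist_triangle ψ n _ _ _
              _ < δ/2 + δ/2 := add_lt_add (by rw [HL8_dynDist_comm]; exact hw.1) hx2
              _ = δ := add_halves δ
          · calc dist (c (x, t)) z ≤ dist (c (x, t)) t + dist t z := dist_triangle _ _ _
              _ < δ/2 + δ/2 := add_lt_add (by rw [dist_comm]; exact hw.2)
                  (by rw [dist_comm]; exact mem_ball.1 htz)
              _ = δ := add_halves δ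
        calc coverNum φ n ε ≤ ((s ×ˢ T).image c).card := HL8_coverNum_le hcov2
          _ ≤ (s ×ˢ T).card := Finset.card_image_le
          _ = s.card * T.card := Finset.card_product s T
          _ = T.card * coverNum ψ n (δ/2) := by rw [hscard, mul_comm]
      -- limsup comparison
      refine le_iSup_of_le ⟨δ/2, half_pos hδ⟩ ?_
      apply HL8_limsup_le
      intro η hη
      have hKpos : (0:ℝ) < T.card := by
        obtain ⟨t, ht, -⟩ := mem_iUnion₂.1 (hT0c (mem_univ (Classical.arbitrary E)))
        exact_mod_cast Finset.card_pos.2 ⟨t, hT0f.mem_toFinset.2 ht⟩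
      have htend : Tendsto (fun n : ℕ => Real.log n) atTop atTop :=
        Real.tendsto_log_atTop.comp tendsto_natCast_atTop_atTop
      filter_upwards [htend.eventually_gt_atTop (max (Real.log T.card / η) 0)] with n hn
      have hlogn : 0 < Real.log n := lt_of_le_of_lt (le_max_right _ _) hn
      have hG1 : (0:ℝ) < (coverNum ψ n (δ/2) : ℝ) := by
        exact_mod_cast HL8_coverNum_pos hψ n (half_pos hδ)
      have hG2 : (0:ℝ) < (coverNum φ n ε : ℝ) := by
        exact_mod_cast HL8_coverNum_pos hφ n hε
      have hKG : Real.log (coverNum φ n ε) ≤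
          Real.log T.card + Real.log (coverNum ψ n (δ/2)) := by
        rw [← Real.log_mul (ne_of_gt hKpos) (ne_of_gt hG1)]
        apply Real.log_le_log hG2
        push_cast
        exact_mod_cast hcovn n
      have hη2 : Real.log T.card / Real.log n < η := by
        rw [div_lt_iff₀ hlogn]
        have h3 : Real.log T.card / η < Real.log n := lt_of_le_of_lt (le_max_left _ _) hn
        calc Real.log T.card = Real.log T.card / η * η :=
              (div_mul_cancel₀ _ (ne_of_gt hη)).symm
          _ < Real.log n * η := mul_lt_mul_of_pos_right h3 hη
          _ = η * Real.log n := mul_comm _ _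
      have hstep : Real.log (coverNum φ n ε) / Real.log n ≤
          η + Real.log (coverNum ψ n (δ/2)) / Real.log n := by
        calc Real.log (coverNum φ n ε) / Real.log n
            ≤ (Real.log T.card + Real.log (coverNum ψ n (δ/2))) / Real.log n :=
              (div_le_div_iff_of_pos_right hlogn).2 hKG
          _ = Real.log T.card / Real.log n + Real.log (coverNum ψ n (δ/2)) / Real.log n :=
              add_div _ _ _
          _ ≤ η + Real.log (coverNum ψ n (δ/2)) / Real.log n :=
              add_le_add_left hη2.le _
      calc ENNReal.ofReal (Real.log (coverNum φ n ε) / Real.log n)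
          ≤ ENNReal.ofReal (η + Real.log (coverNum ψ n (δ/2)) / Real.log n) :=
            ENNReal.ofReal_le_ofReal hstep
        _ = ENNReal.ofReal η + ENNReal.ofReal (Real.log (coverNum ψ n (δ/2)) / Real.log n) :=
            ENNReal.ofReal_add hη.le (div_nonneg (Real.log_natCast_nonneg _) hlogn.le)
        _ = ENNReal.ofReal η + ENNReal.ofReal (Real.log (coverNum ψ n (δ/2)) / Real.log n) := rfl
    · -- hpol ψ ≤ hpol φ
      refine iSup_le fun ε0 => ?_
      obtain ⟨ε, hε⟩ := ε0
      obtain ⟨δ, hδ, Hπ⟩ := Metric.uniformContinuous_iff.1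
        (CompactSpace.uniformContinuous_of_continuous hπc) ε hε
      have hcov : ∀ n, coverNum ψ n ε ≤ coverNum φ n δ := by
        intro n
        obtain ⟨s, hcard, hcovs⟩ := HL8_coverNum_spec hφ n hδ
        have hXcov : ∀ x : X, ∃ c ∈ s.image π, dynDist ψ n c x < ε := by
          intro x
          obtain ⟨z, rfl⟩ := hπs x
          obtain ⟨c, hc, hcz⟩ := hcovs z
          refine ⟨π c, Finset.mem_image_of_mem π hc,
            (HL8_dynDist_lt_iff hε).2 fun k hk => ?_⟩
          rw [← hsc, ← hsc]
          exact Hπ (lt_of_le_of_lt (HL8_dist_le_dynDist hk c z) hcz)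
        calc coverNum ψ n ε ≤ (s.image π).card := HL8_coverNum_le hXcov
          _ ≤ s.card := Finset.card_image_le
          _ = coverNum φ n δ := hcard
      refine le_iSup_of_le ⟨δ, hδ⟩ ?_
      refine limsup_le_limsup (Eventually.of_forall fun n => ?_)
      have h1 : (0:ℝ) < (coverNum ψ n ε : ℝ) := by
        exact_mod_cast HL8_coverNum_pos hψ n hε
      have hlog : Real.log (coverNum ψ n ε) ≤ Real.log (coverNum φ n δ) :=
        Real.log_le_log h1 (by exact_mod_cast hcov n)
      apply ENNReal.ofReal_le_ofReal
      rcases eq_or_lt_of_le (Real.log_natCast_nonneg n) with h | h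
      · rw [← h]; simp
      · exact (div_le_div_iff_of_pos_right h).2 hlog
end
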